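/- Suppose R_i(n_i(t)) ≤ R_j(n_j(t)) + 1 (balancing), R_j(n_j(t)) ≥ 1, and the candidate bounds have the form R_k(n) = min(n, d_k · C · n^β) with d_k ≥ 1, C ≥ 1, β ∈ (0,1]. If n_i(t) is large enough that R_i(n_i(t)) = d_i C n_i(t)^β < n_i(t), then n_i(t)/n_j(t) ≤ 2^{1/β} · (d_j/d_i)^{1/β}; and if instead R_i(n_i(t)) = n_i(t), then n_i(t)/n_j(t) ≤ 2. -/
import Mathlib


open Real

/-- Play-ratio bound under balancing with candidate bounds `R_k(n) = min(n, d_k C n^β)`.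
If `R_i(n_i) ≤ R_j(n_j) + 1` and `R_j(n_j) ≥ 1`, then:
(1) if `R_i` is in the `√`-type regime (`d_i C n_i^β < n_i`), then
`n_i/n_j ≤ 2^(1/β) (d_j/d_i)^(1/β)`;
(2) if `R_i` is in the linear regime (`n_i ≤ d_i C n_i^β`), then `n_i/n_j ≤ 2`. -/
theorem play_ratio_bound (ni nj : ℕ) (hni : 0 < ni) (hnj : 0 < nj)
    (di dj C β : ℝ) (hdi : 1 ≤ di) (hdj : 1 ≤ dj) (hC : 1 ≤ C)
    (hβ0 : 0 < β) (hβ1 : β ≤ 1)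
    (hbal : min (ni : ℝ) (di * C * (ni : ℝ) ^ β)
            ≤ min (nj : ℝ) (dj * C * (nj : ℝ) ^ β) + 1)
    (hRj1 : 1 ≤ min (nj : ℝ) (dj * C * (nj : ℝ) ^ β)) :
    (di * C * (ni : ℝ) ^ β < (ni : ℝ) →
      (ni : ℝ) / (nj : ℝ) ≤ 2 ^ (1 / β) * (dj / di) ^ (1 / β)) ∧
    ((ni : ℝ) ≤ di * C * (ni : ℝ) ^ β →
      (ni : ℝ) / (nj : ℝ) ≤ 2) := by
  have hni' : (0:ℝ) < ni := by exact_mod_cast hni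
  have hnj' : (0:ℝ) < nj := by exact_mod_cast hnj
  have hC0 : (0:ℝ) < C := lt_of_lt_of_le zero_lt_one hC
  have hdi0 : (0:ℝ) < di := lt_of_lt_of_le zero_lt_one hdi
  have hdj0 : (0:ℝ) < dj := lt_of_lt_of_le zero_lt_one hdj
  have hpb : (0:ℝ) < (nj:ℝ) ^ β := Real.rpow_pos_of_pos hnj' β
  constructor
  · intro h
    have hRi : min (ni:ℝ) (di * C * (ni:ℝ) ^ β) = di * C * (ni:ℝ) ^ β :=
      min_eq_right h.le
    have h1 : (1:ℝ) ≤ dj * C * (nj:ℝ) ^ β := le_trans hRj1 (min_le_right _ _)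
    have h2 : di * C * (ni:ℝ) ^ β ≤ 2 * (dj * C * (nj:ℝ) ^ β) := by
      have := hbal
      rw [hRi] at this
      have h' := min_le_right (nj:ℝ) (dj * C * (nj:ℝ) ^ β)
      linarith
    have h3' : di * (ni:ℝ) ^ β ≤ 2 * dj * (nj:ℝ) ^ β := by
      have h2' : (di * (ni:ℝ) ^ β) * C ≤ (2 * dj * (nj:ℝ) ^ β) * C := by
        nlinarith [h2]
      exact le_of_mul_le_mul_right h2' hC0
    have h3 : ((ni:ℝ) / (nj:ℝ)) ^ β ≤ 2 * dj / di := by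
      rw [Real.div_rpow hni'.le hnj'.le, div_le_div_iff₀ hpb hdi0]
      nlinarith [h3']
    have hx : (0:ℝ) ≤ (ni:ℝ) / (nj:ℝ) := by positivity
    have h4 : (ni:ℝ) / (nj:ℝ) = (((ni:ℝ) / (nj:ℝ)) ^ β) ^ (1/β) := by
      rw [← Real.rpow_mul hx, mul_one_div, div_self hβ0.ne', Real.rpow_one]
    have h5 : (((ni:ℝ) / (nj:ℝ)) ^ β) ^ (1/β) ≤ (2 * dj / di) ^ (1/β) :=
      Real.rpow_le_rpow (by positivity) h3 (by positivity)
    calc (ni:ℝ) / (nj:ℝ) = (((ni:ℝ) / (nj:ℝ)) ^ β) ^ (1/β) := h4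
      _ ≤ (2 * dj / di) ^ (1/β) := h5
      _ = 2 ^ (1/β) * (dj/di) ^ (1/β) := by
          rw [show (2:ℝ) * dj / di = 2 * (dj/di) by ring,
            Real.mul_rpow (by norm_num) (by positivity)]
  · intro h
    have hRi : min (ni:ℝ) (di * C * (ni:ℝ) ^ β) = (ni:ℝ) := min_eq_left h
    have h1 : (1:ℝ) ≤ (nj:ℝ) := le_trans hRj1 (min_le_left _ _)
    have h' := min_le_left (nj:ℝ) (dj * C * (nj:ℝ) ^ β)
    rw [hRi] at hbal
    rw [div_le_iff₀ hnj']
    linarith
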